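/- arXiv:2004.07402 — 13 statements merged into one kernel-verified Lean document; each statement's English description precedes it below -/
import Mathlib

section
/- Let S, I, Q, R, B : ℝ → ℝ be differentiable functions satisfying the SIQRB system for all t ≥ 0, with κ + B(t) > 0 for all t ≥ 0 and nonnegative initial data S(0) ≥ 0, I(0) ≥ 0, Q(0) ≥ 0, R(0) ≥ 0, B(0) ≥ 0. Then S(t) ≥ 0, I(t) ≥ 0, Q(t) ≥ 0, R(t) ≥ 0 and B(t) ≥ 0 for all t ≥ 0. -/
set_option maxHeartbeats 400000

open Set Filter Real Topology

lemma siqrb_div_le {a m c P : ℝ} (hc : 0 < c) (hcP : c ≤ P) (hm : 0 ≤ m) (ha : a ≤ m) :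
    a / P ≤ m / c := by
  have hP : 0 < P := lt_of_lt_of_le hc hcP
  rw [div_le_div_iff₀ hP hc]
  nlinarith [mul_le_mul_of_nonneg_right ha hc.le, mul_le_mul_of_nonneg_left hcP hm]

lemma siqrb_div_ge {a m c P : ℝ} (hc : 0 < c) (hcP : c ≤ P) (hm : 0 ≤ m) (ha : -m ≤ a) :
    -(m / c) ≤ a / P := by
  have := siqrb_div_le (a := -a) hc hcP hm (by linarith)
  have hP : 0 < P := lt_of_lt_of_le hc hcP
  rw [neg_div] at this
  linarith

lemma siqrb_no_crossing {g : ℝ → ℝ} {g' t₀ : ℝ} (h : HasDerivAt g g' t₀) (hg' : 0 < g')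
    (h0 : g t₀ = 0) (ht₀ : 0 < t₀) (hpos : ∀ u, 0 ≤ u → u < t₀ → 0 < g u) : False := by
  have hs : Tendsto (slope g t₀) (𝓝[<] t₀) (𝓝 g') :=
    (hasDerivAt_iff_tendsto_slope.mp h).mono_left
      (nhdsWithin_mono _ (fun x hx => ne_of_lt hx))
  have hev : ∀ᶠ u in 𝓝[<] t₀, 0 < slope g t₀ u := hs.eventually (eventually_gt_nhds hg')
  have hIoo : Ioo 0 t₀ ∈ 𝓝[<] t₀ := Ioo_mem_nhdsLT_of_mem ⟨ht₀, le_refl _⟩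
  obtain ⟨u, hu1, hu2⟩ := (hev.and (eventually_of_mem hIoo (fun x hx => hx))).exists
  have hue : slope g t₀ u = g u / (u - t₀) := by
    simp [slope, h0]
    ring
  rw [hue] at hu1
  have hgu : 0 < g u := hpos u hu2.1.le hu2.2
  have : g u / (u - t₀) < 0 := div_neg_of_pos_of_neg hgu (by linarith [hu2.2])
  linarith

lemma siqrb_nonneg_of_perturb {x e σ₀ : ℝ} (he : 0 < e) (hσ₀ : 0 < σ₀)
    (h : ∀ σ, 0 < σ → σ ≤ σ₀ → 0 < x + σ * e) : 0 ≤ x := by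
  by_contra hx
  push_neg at hx
  set σ := min σ₀ (-x / (2 * e)) with hσdef
  have hσpos : 0 < σ := lt_min hσ₀ (by apply div_pos (by linarith) (by linarith))
  have h1 := h σ hσpos (min_le_left _ _)
  have h2 : σ * e ≤ (-x / (2 * e)) * e :=
    mul_le_mul_of_nonneg_right (min_le_right _ _) he.le
  have h3 : (-x / (2 * e)) * e = -x / 2 := by field_simp
  linarith

/-- Nonnegativity of solutions of the SIQRB cholera model. -/
theorem siqrb_nonneg
    (Λ β κ ω μ δ ε η d ρ α₁ α₂ : ℝ)
    (hΛ : 0 < Λ) (hβ : 0 < β) (hκ : 0 < κ) (hω : 0 < ω) (hμ : 0 < μ)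
    (hδ : 0 < δ) (hε : 0 < ε) (hη : 0 < η) (hd : 0 < d) (hρ : 0 < ρ)
    (hα₁ : 0 ≤ α₁) (hα₂ : 0 ≤ α₂)
    (S I Q R B : ℝ → ℝ)
    (hS : ∀ t, 0 ≤ t →
      HasDerivAt S (Λ - β * B t * S t / (κ + B t) + ω * R t - μ * S t) t)
    (hI : ∀ t, 0 ≤ t →
      HasDerivAt I (β * B t * S t / (κ + B t) - (δ + α₁ + μ) * I t) t)
    (hQ : ∀ t, 0 ≤ t →
      HasDerivAt Q (δ * I t - (ε + α₂ + μ) * Q t) t)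
    (hR : ∀ t, 0 ≤ t →
      HasDerivAt R (ε * Q t - (ω + μ) * R t) t)
    (hB : ∀ t, 0 ≤ t →
      HasDerivAt B (η * I t - d * B t - ρ * B t * S t / (κ + B t)) t)
    (hκB : ∀ t, 0 ≤ t → 0 < κ + B t)
    (hS0 : 0 ≤ S 0) (hI0 : 0 ≤ I 0) (hQ0 : 0 ≤ Q 0) (hR0 : 0 ≤ R 0)
    (hB0 : 0 ≤ B 0) :
    ∀ t, 0 ≤ t → 0 ≤ S t ∧ 0 ≤ I t ∧ 0 ≤ Q t ∧ 0 ≤ R t ∧ 0 ≤ B t := by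
  intro T hT
  -- continuity on [0, T]
  have hScont : ContinuousOn S (Icc 0 T) := fun u hu => ((hS u hu.1).continuousAt).continuousWithinAt
  have hIcont : ContinuousOn I (Icc 0 T) := fun u hu => ((hI u hu.1).continuousAt).continuousWithinAt
  have hQcont : ContinuousOn Q (Icc 0 T) := fun u hu => ((hQ u hu.1).continuousAt).continuousWithinAt
  have hRcont : ContinuousOn R (Icc 0 T) := fun u hu => ((hR u hu.1).continuousAt).continuousWithinAt
  have hBcont : ContinuousOn B (Icc 0 T) := fun u hu => ((hB u hu.1).continuousAt).continuousWithinAt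
  -- bounds
  obtain ⟨MS, hMS⟩ := isCompact_Icc.exists_bound_of_continuousOn hScont
  obtain ⟨MB, hMB⟩ := isCompact_Icc.exists_bound_of_continuousOn hBcont
  set M : ℝ := max (max MS MB) 1 with hMdef
  have hM1 : (1:ℝ) ≤ M := le_max_right _ _
  have hM0 : (0:ℝ) ≤ M := by linarith
  have hMSb : ∀ u ∈ Icc (0:ℝ) T, |S u| ≤ M := by
    intro u hu
    have := hMS u hu
    rw [Real.norm_eq_abs] at this
    exact this.trans ((le_max_left _ _).trans (le_max_left _ _))
  have hMBb : ∀ u ∈ Icc (0:ℝ) T, |B u| ≤ M := by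
    intro u hu
    have := hMB u hu
    rw [Real.norm_eq_abs] at this
    exact this.trans ((le_max_right _ _).trans (le_max_left _ _))
  -- min of κ + B
  obtain ⟨u₀, hu₀, hmin⟩ := isCompact_Icc.exists_isMinOn (nonempty_Icc.2 hT)
    (continuousOn_const.add hBcont)
  set c : ℝ := κ + B u₀ with hcdef
  have hc : 0 < c := hκB u₀ hu₀.1
  have hcB : ∀ u ∈ Icc (0:ℝ) T, c ≤ κ + B u := fun u hu => hmin hu
  set K : ℝ := 1 + 3*(β*M/c) + ρ*M/c + ω + δ + ε + η with hKdef
  have hq1 : 0 ≤ β*M/c := by positivity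
  have hq2 : 0 ≤ ρ*M/c := by positivity
  have hK0 : 0 < K := by rw [hKdef]; linarith
  clear_value M c K
  -- main perturbation claim
  have key : ∀ σ, 0 < σ → σ * Real.exp (K*T) ≤ M → ∀ u, u ∈ Icc (0:ℝ) T →
      0 < S u + σ * Real.exp (K*u) ∧ 0 < I u + σ * Real.exp (K*u) ∧
      0 < Q u + σ * Real.exp (K*u) ∧ 0 < R u + σ * Real.exp (K*u) ∧
      0 < B u + σ * Real.exp (K*u) := by
    intro σ hσ hσM
    set E : ℝ → ℝ := fun u => σ * Real.exp (K*u) with hEdef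
    have hEpos : ∀ u, 0 < E u := fun u => mul_pos hσ (Real.exp_pos _)
    have hEderiv : ∀ u, HasDerivAt E (E u * K) u := by
      intro u
      have h1 : HasDerivAt (fun v : ℝ => K * v) K u := by
        simpa using (hasDerivAt_id u).const_mul K
      have h2 := (Real.hasDerivAt_exp (K*u)).comp u h1
      have h3 := h2.const_mul σ
      simp only [hEdef]
      exact h3.congr_deriv (by ring)
    set f : ℝ → ℝ := fun u => min (S u + E u)
      (min (I u + E u) (min (Q u + E u) (min (R u + E u) (B u + E u)))) with hfdef
    have hEc : ContinuousOn E (Icc 0 T) :=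
      (continuous_const.mul (Real.continuous_exp.comp (continuous_const.mul continuous_id))).continuousOn
    have hEct : ∀ v : ℝ, ContinuousAt E v := fun v =>
      (continuous_const.mul (Real.continuous_exp.comp (continuous_const.mul continuous_id))).continuousAt
    have hEeq : ∀ u, E u = σ * Real.exp (K*u) := fun u => by rw [hEdef]
    clear_value E
    have hfcont : ContinuousOn f (Icc 0 T) :=
      (hScont.add hEc).inf ((hIcont.add hEc).inf ((hQcont.add hEc).inf
        ((hRcont.add hEc).inf (hBcont.add hEc))))
    have hmain : ∀ u ∈ Icc (0:ℝ) T, 0 < f u := by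
      by_contra hbad
      push_neg at hbad
      obtain ⟨w, hw, hfw⟩ := hbad
      set Bad : Set ℝ := Icc 0 T ∩ f ⁻¹' (Iic 0) with hBaddef
      have hBadclosed : IsClosed Bad :=
        hfcont.preimage_isClosed_of_isClosed isClosed_Icc isClosed_Iic
      have hBadne : Bad.Nonempty := ⟨w, hw, hfw⟩
      have hBadbdd : BddBelow Bad := bddBelow_Icc.mono inter_subset_left
      set t₀ : ℝ := sInf Bad with ht₀def
      have ht₀Bad : t₀ ∈ Bad := hBadclosed.csInf_mem hBadne hBadbdd
      have hBadle : ∀ u ∈ Bad, t₀ ≤ u := fun u hu => csInf_le hBadbdd hu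
      clear_value t₀
      have ht₀mem : t₀ ∈ Icc (0:ℝ) T := ht₀Bad.1
      have hft₀ : f t₀ ≤ 0 := ht₀Bad.2
      have hE0 : E 0 = σ := by rw [hEeq]; simp
      have hf0 : 0 < f 0 := by
        have hσ' : 0 < E 0 := hEpos 0
        exact lt_min (by linarith) (lt_min (by linarith) (lt_min (by linarith)
          (lt_min (by linarith) (by linarith))))
      have ht₀pos : 0 < t₀ := by
        rcases ht₀mem.1.lt_or_eq with h | h
        · exact h
        · exfalso; rw [← h] at hft₀; linarith
      have hbefore : ∀ u, 0 ≤ u → u < t₀ → 0 < f u := by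
        intro u hu hut
        by_contra h
        push_neg at h
        have humem : u ∈ Bad := ⟨⟨hu, hut.le.trans ht₀mem.2⟩, h⟩
        have := hBadle u humem
        linarith
      have hft₀ge : 0 ≤ f t₀ := by
        have hcontat : ContinuousAt f t₀ :=
          ((hS t₀ ht₀mem.1).continuousAt.add (hEct t₀)).inf
            (((hI t₀ ht₀mem.1).continuousAt.add (hEct t₀)).inf
              (((hQ t₀ ht₀mem.1).continuousAt.add (hEct t₀)).inf
                (((hR t₀ ht₀mem.1).continuousAt.add (hEct t₀)).inf
                  ((hB t₀ ht₀mem.1).continuousAt.add (hEct t₀)))))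
        have htend : Tendsto f (𝓝[<] t₀) (𝓝 (f t₀)) :=
          hcontat.tendsto.mono_left nhdsWithin_le_nhds
        have hev : ∀ᶠ u in 𝓝[<] t₀, 0 ≤ f u :=
          eventually_of_mem (Ioo_mem_nhdsLT_of_mem ⟨ht₀pos, le_refl _⟩)
            (fun u hu => (hbefore u hu.1.le hu.2).le)
        exact ge_of_tendsto htend hev
      -- all components nonneg at t₀
      have hSc : 0 ≤ S t₀ + E t₀ := hft₀ge.trans (min_le_left _ _)
      have hIc : 0 ≤ I t₀ + E t₀ :=
        hft₀ge.trans ((min_le_right _ _).trans (min_le_left _ _))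
      have hQc : 0 ≤ Q t₀ + E t₀ :=
        hft₀ge.trans ((min_le_right _ _).trans ((min_le_right _ _).trans (min_le_left _ _)))
      have hRc : 0 ≤ R t₀ + E t₀ :=
        hft₀ge.trans ((min_le_right _ _).trans ((min_le_right _ _).trans
          ((min_le_right _ _).trans (min_le_left _ _))))
      have hBc : 0 ≤ B t₀ + E t₀ :=
        hft₀ge.trans ((min_le_right _ _).trans ((min_le_right _ _).trans
          ((min_le_right _ _).trans (min_le_right _ _))))
      -- shared numeric facts at t₀
      have he₀ : 0 < E t₀ := hEpos t₀
      have heM : E t₀ ≤ M := by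
        have h1 : K * t₀ ≤ K * T := mul_le_mul_of_nonneg_left ht₀mem.2 hK0.le
        have h2 : Real.exp (K * t₀) ≤ Real.exp (K * T) := Real.exp_le_exp.mpr h1
        have h3 : σ * Real.exp (K * t₀) ≤ σ * Real.exp (K * T) :=
          mul_le_mul_of_nonneg_left h2 hσ.le
        rw [hEeq]
        linarith
      have hSM := abs_le.mp (hMSb t₀ ht₀mem)
      have hBM := abs_le.mp (hMBb t₀ ht₀mem)
      have hPc : c ≤ κ + B t₀ := hcB t₀ ht₀mem
      have hPpos : 0 < κ + B t₀ := hκB t₀ ht₀mem.1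
      have hSge : -(E t₀) ≤ S t₀ := by linarith
      have hIge : -(E t₀) ≤ I t₀ := by linarith
      have hQge : -(E t₀) ≤ Q t₀ := by linarith
      have hRge : -(E t₀) ≤ R t₀ := by linarith
      have hBge : -(E t₀) ≤ B t₀ := by linarith
      have hKe : E t₀ * K = E t₀ + 3*(β*M*(E t₀)/c) + ρ*M*(E t₀)/c + ω*(E t₀) + δ*(E t₀)
          + ε*(E t₀) + η*(E t₀) := by
        rw [hKdef]; ring
      have hqq1 : 0 ≤ β*M*(E t₀)/c :=
        div_nonneg (mul_nonneg (mul_nonneg hβ.le hM0) he₀.le) hc.le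
      have hqq2 : 0 ≤ ρ*M*(E t₀)/c :=
        div_nonneg (mul_nonneg (mul_nonneg hρ.le hM0) he₀.le) hc.le
      have hωE : 0 ≤ ω * E t₀ := mul_nonneg hω.le he₀.le
      have hδE : 0 ≤ δ * E t₀ := mul_nonneg hδ.le he₀.le
      have hεE : 0 ≤ ε * E t₀ := mul_nonneg hε.le he₀.le
      have hηE : 0 ≤ η * E t₀ := mul_nonneg hη.le he₀.le
      have hμe : 0 ≤ μ * E t₀ := mul_nonneg hμ.le he₀.le
      -- one component vanishes at t₀
      have hcases : S t₀ + E t₀ ≤ 0 ∨ I t₀ + E t₀ ≤ 0 ∨ Q t₀ + E t₀ ≤ 0 ∨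
          R t₀ + E t₀ ≤ 0 ∨ B t₀ + E t₀ ≤ 0 := by
        have hd : f t₀ ≤ 0 := hft₀
        rw [hfdef] at hd
        simpa [min_le_iff] using hd
      rcases hcases with hz | hz | hz | hz | hz
      · -- S component
        have hSeq : S t₀ = -(E t₀) := by linarith
        have hb1 : β * B t₀ * S t₀ / (κ + B t₀) ≤ β*M*(E t₀)/c := by
          apply siqrb_div_le hc hPc (mul_nonneg (mul_nonneg hβ.le hM0) he₀.le)
          have hprod : 0 ≤ (β * E t₀) * (M + B t₀) :=
            mul_nonneg (mul_nonneg hβ.le he₀.le) (by linarith [hBM.1])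
          rw [hSeq]
          linarith only [hprod]
        refine siqrb_no_crossing ((hS t₀ ht₀mem.1).add (hEderiv t₀)) ?_
          (by show S t₀ + E t₀ = 0; linarith) ht₀pos
          (fun u hu hut => lt_of_lt_of_le (hbefore u hu hut) (min_le_left _ _))
        have hωR : ω * (-(E t₀)) ≤ ω * R t₀ := mul_le_mul_of_nonneg_left hRge hω.le
        have hμS : μ * S t₀ = -(μ * E t₀) := by rw [hSeq]; ring
        linarith only [hb1, hωR, hμS, hμe, hKe, hqq1, hqq2, hΛ, he₀, hδE, hεE, hηE]
      · -- I component
        have hIeq : I t₀ = -(E t₀) := by linarith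
        have hprod : 0 ≤ (B t₀ + E t₀) * (S t₀ + E t₀) :=
          mul_nonneg (by linarith) (by linarith)
        have hES : E t₀ * S t₀ ≤ M * E t₀ := by
          have h5 := mul_le_mul_of_nonneg_left hSM.2 he₀.le
          linarith only [h5]
        have hEB : E t₀ * B t₀ ≤ M * E t₀ := by
          have h5 := mul_le_mul_of_nonneg_left hBM.2 he₀.le
          linarith only [h5]
        have hEE : E t₀ * E t₀ ≤ M * E t₀ := mul_le_mul_of_nonneg_right heM he₀.le
        have hBS0 : -(3*(M*(E t₀))) ≤ B t₀ * S t₀ := by linarith only [hprod, hES, hEB, hEE]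
        have hBS : -(3*(β*M*(E t₀))) ≤ β * B t₀ * S t₀ := by
          have h5 := mul_le_mul_of_nonneg_left hBS0 hβ.le
          linarith only [h5]
        have hb1 : -(3*(β*M*(E t₀)/c)) ≤ β * B t₀ * S t₀ / (κ + B t₀) := by
          have h6 : -(3*(β*M*(E t₀))/c) ≤ β * B t₀ * S t₀ / (κ + B t₀) :=
            siqrb_div_ge hc hPc
              (by have := mul_nonneg (mul_nonneg hβ.le hM0) he₀.le; linarith :
                (0:ℝ) ≤ 3*(β*M*(E t₀))) hBS
          rw [show (3*(β*M*(E t₀)/c)) = 3*(β*M*(E t₀))/c from by ring]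
          exact h6
        refine siqrb_no_crossing ((hI t₀ ht₀mem.1).add (hEderiv t₀)) ?_
          (by show I t₀ + E t₀ = 0; linarith) ht₀pos
          (fun u hu hut => lt_of_lt_of_le (hbefore u hu hut)
            ((min_le_right _ _).trans (min_le_left _ _)))
        have h3 : (δ + α₁ + μ) * I t₀ = -((δ + α₁ + μ) * E t₀) := by rw [hIeq]; ring
        have h4 : 0 ≤ (δ + α₁ + μ) * E t₀ :=
          mul_nonneg (by linarith) he₀.le
        linarith only [hb1, h3, h4, hKe, hqq2, he₀, hωE, hδE, hεE, hηE]
      · -- Q component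
        have hQeq : Q t₀ = -(E t₀) := by linarith
        refine siqrb_no_crossing ((hQ t₀ ht₀mem.1).add (hEderiv t₀)) ?_
          (by show Q t₀ + E t₀ = 0; linarith) ht₀pos
          (fun u hu hut => lt_of_lt_of_le (hbefore u hu hut)
            ((min_le_right _ _).trans ((min_le_right _ _).trans (min_le_left _ _))))
        have h1 : δ * (-(E t₀)) ≤ δ * I t₀ := mul_le_mul_of_nonneg_left hIge hδ.le
        have h3 : (ε + α₂ + μ) * Q t₀ = -((ε + α₂ + μ) * E t₀) := by rw [hQeq]; ring
        have h4 : 0 ≤ (ε + α₂ + μ) * E t₀ := mul_nonneg (by linarith) he₀.le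
        linarith only [h1, h3, h4, hKe, hqq1, hqq2, he₀, hωE, hεE, hηE, hδE]
      · -- R component
        have hReq : R t₀ = -(E t₀) := by linarith
        refine siqrb_no_crossing ((hR t₀ ht₀mem.1).add (hEderiv t₀)) ?_
          (by show R t₀ + E t₀ = 0; linarith) ht₀pos
          (fun u hu hut => lt_of_lt_of_le (hbefore u hu hut)
            ((min_le_right _ _).trans ((min_le_right _ _).trans
              ((min_le_right _ _).trans (min_le_left _ _)))))
        have h1 : ε * (-(E t₀)) ≤ ε * Q t₀ := mul_le_mul_of_nonneg_left hQge hε.le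
        have h3 : (ω + μ) * R t₀ = -((ω + μ) * E t₀) := by rw [hReq]; ring
        have h4 : 0 ≤ (ω + μ) * E t₀ := mul_nonneg (by linarith) he₀.le
        linarith only [h1, h3, h4, hKe, hqq1, hqq2, he₀, hωE, hδE, hηE, hεE]
      · -- B component
        have hBeq : B t₀ = -(E t₀) := by linarith
        have hb1 : ρ * B t₀ * S t₀ / (κ + B t₀) ≤ ρ*M*(E t₀)/c := by
          apply siqrb_div_le hc hPc (mul_nonneg (mul_nonneg hρ.le hM0) he₀.le)
          have hprod : 0 ≤ (ρ * E t₀) * (M + S t₀) :=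
            mul_nonneg (mul_nonneg hρ.le he₀.le) (by linarith [hSM.1])
          rw [hBeq]
          linarith only [hprod]
        refine siqrb_no_crossing ((hB t₀ ht₀mem.1).add (hEderiv t₀)) ?_
          (by show B t₀ + E t₀ = 0; linarith) ht₀pos
          (fun u hu hut => lt_of_lt_of_le (hbefore u hu hut)
            ((min_le_right _ _).trans ((min_le_right _ _).trans
              ((min_le_right _ _).trans (min_le_right _ _)))))
        have h1 : η * (-(E t₀)) ≤ η * I t₀ := mul_le_mul_of_nonneg_left hIge hη.le
        have h3 : d * B t₀ = -(d * E t₀) := by rw [hBeq]; ring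
        have h4 : 0 ≤ d * E t₀ := mul_nonneg hd.le he₀.le
        linarith only [h1, h3, h4, hb1, hKe, hqq1, he₀, hωE, hδE, hεE, hηE]
    intro u hu
    have h := hmain u hu
    rw [← hEeq u]
    exact ⟨lt_of_lt_of_le h (min_le_left _ _),
      lt_of_lt_of_le h ((min_le_right _ _).trans (min_le_left _ _)),
      lt_of_lt_of_le h ((min_le_right _ _).trans ((min_le_right _ _).trans (min_le_left _ _))),
      lt_of_lt_of_le h ((min_le_right _ _).trans ((min_le_right _ _).trans
        ((min_le_right _ _).trans (min_le_left _ _)))),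
      lt_of_lt_of_le h ((min_le_right _ _).trans ((min_le_right _ _).trans
        ((min_le_right _ _).trans (min_le_right _ _))))⟩
  -- conclude
  have hexp : 0 < Real.exp (K*T) := Real.exp_pos _
  have hσ₀ : 0 < M / Real.exp (K*T) := by positivity
  have hmemT : T ∈ Icc (0:ℝ) T := ⟨hT, le_refl T⟩
  refine ⟨?_, ?_, ?_, ?_, ?_⟩
  · exact siqrb_nonneg_of_perturb hexp hσ₀ (fun σ hσp hσle =>
      (key σ hσp ((le_div_iff₀ hexp).mp hσle) T hmemT).1)
  · exact siqrb_nonneg_of_perturb hexp hσ₀ (fun σ hσp hσle =>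
      (key σ hσp ((le_div_iff₀ hexp).mp hσle) T hmemT).2.1)
  · exact siqrb_nonneg_of_perturb hexp hσ₀ (fun σ hσp hσle =>
      (key σ hσp ((le_div_iff₀ hexp).mp hσle) T hmemT).2.2.1)
  · exact siqrb_nonneg_of_perturb hexp hσ₀ (fun σ hσp hσle =>
      (key σ hσp ((le_div_iff₀ hexp).mp hσle) T hmemT).2.2.2.1)
  · exact siqrb_nonneg_of_perturb hexp hσ₀ (fun σ hσp hσle =>
      (key σ hσp ((le_div_iff₀ hexp).mp hσle) T hmemT).2.2.2.2)
end

section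
/- Let S, I, Q, R, B : ℝ → ℝ be differentiable functions satisfying the SIQRB system for all t ≥ 0, with κ + B(t) > 0, S(t) ≥ 0, I(t) ≥ 0, Q(t) ≥ 0, R(t) ≥ 0 and B(t) ≥ 0 for all t ≥ 0. If S(0) + I(0) + Q(0) + R(0) ≤ Λ/μ, then S(t) + I(t) + Q(t) + R(t) ≤ Λ/μ for all t ≥ 0. -/
/-- Boundedness of the total human population in the SIQRB model. -/
theorem siqrb_population_bounded
    (Λ β κ ω μ δ ε η d ρ α₁ α₂ : ℝ)
    (hΛ : 0 < Λ) (hβ : 0 < β) (hκ : 0 < κ) (hω : 0 < ω) (hμ : 0 < μ)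
    (hδ : 0 < δ) (hε : 0 < ε) (hη : 0 < η) (hd : 0 < d) (hρ : 0 < ρ)
    (hα₁ : 0 ≤ α₁) (hα₂ : 0 ≤ α₂)
    (S I Q R B : ℝ → ℝ)
    (hS : ∀ t, 0 ≤ t →
      HasDerivAt S (Λ - β * B t * S t / (κ + B t) + ω * R t - μ * S t) t)
    (hI : ∀ t, 0 ≤ t →
      HasDerivAt I (β * B t * S t / (κ + B t) - (δ + α₁ + μ) * I t) t)
    (hQ : ∀ t, 0 ≤ t →
      HasDerivAt Q (δ * I t - (ε + α₂ + μ) * Q t) t)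
    (hR : ∀ t, 0 ≤ t →
      HasDerivAt R (ε * Q t - (ω + μ) * R t) t)
    (hB : ∀ t, 0 ≤ t →
      HasDerivAt B (η * I t - d * B t - ρ * B t * S t / (κ + B t)) t)
    (hκB : ∀ t, 0 ≤ t → 0 < κ + B t)
    (hSnn : ∀ t, 0 ≤ t → 0 ≤ S t) (hInn : ∀ t, 0 ≤ t → 0 ≤ I t)
    (hQnn : ∀ t, 0 ≤ t → 0 ≤ Q t) (hRnn : ∀ t, 0 ≤ t → 0 ≤ R t)
    (hBnn : ∀ t, 0 ≤ t → 0 ≤ B t)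
    (hN0 : S 0 + I 0 + Q 0 + R 0 ≤ Λ / μ) :
    ∀ t, 0 ≤ t → S t + I t + Q t + R t ≤ Λ / μ := by
  set g : ℝ → ℝ := fun t => (S t + I t + Q t + R t - Λ / μ) * Real.exp (μ * t) with hg
  have hgderiv : ∀ t, 0 ≤ t →
      HasDerivAt g ((-α₁ * I t - α₂ * Q t) * Real.exp (μ * t)) t := by
    intro t ht
    have hN : HasDerivAt (fun t => S t + I t + Q t + R t - Λ / μ)
        (Λ - μ * (S t + I t + Q t + R t) - α₁ * I t - α₂ * Q t) t := by
      have := ((((hS t ht).add (hI t ht)).add (hQ t ht)).add (hR t ht)).sub_const (Λ / μ)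
      refine this.congr_deriv ?_
      ring
    have hexp : HasDerivAt (fun t => Real.exp (μ * t)) (μ * Real.exp (μ * t)) t := by
      have := (Real.hasDerivAt_exp (μ * t)).comp t ((hasDerivAt_id t).const_mul μ)
      simpa [mul_comm, Function.comp_def] using this
    have := hN.mul hexp
    refine this.congr_deriv ?_
    field_simp
    ring
  have hanti : AntitoneOn g (Set.Ici (0:ℝ)) := by
    apply antitoneOn_of_deriv_nonpos (convex_Ici 0)
    · intro t ht
      exact ((hgderiv t ht).continuousAt).continuousWithinAt
    · intro t ht
      rw [interior_Ici] at ht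
      exact ((hgderiv t (le_of_lt ht)).differentiableAt).differentiableWithinAt
    · intro t ht
      rw [interior_Ici] at ht
      have ht' : (0:ℝ) ≤ t := le_of_lt ht
      rw [(hgderiv t ht').deriv]
      have h1 := hInn t ht'
      have h2 := hQnn t ht'
      have := Real.exp_pos (μ * t)
      apply mul_nonpos_of_nonpos_of_nonneg _ this.le
      nlinarith
  intro t ht
  have h0 : g t ≤ g 0 := hanti (Set.self_mem_Ici) ht ht
  have hg0 : g 0 ≤ 0 := by
    simp only [hg, mul_zero, Real.exp_zero, mul_one]
    linarith
  have hgt : g t ≤ 0 := h0.trans hg0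
  simp only [hg] at hgt
  have hep := Real.exp_pos (μ * t)
  by_contra hcon
  push_neg at hcon
  nlinarith [mul_pos (sub_pos.mpr hcon) hep]
end

section
/- Let S, I, B : ℝ → ℝ with B differentiable and satisfying B'(t) = ηI(t) − dB(t) − ρB(t)S(t)/(κ + B(t)) for all t ≥ 0, where κ + B(t) > 0, S(t) ≥ 0, B(t) ≥ 0 and 0 ≤ I(t) ≤ Λ/μ for all t ≥ 0. If B(0) ≤ Λη/(μd), then B(t) ≤ Λη/(μd) for all t ≥ 0. -/
/-- Boundedness of the bacterial concentration in the SIQRB model. -/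
theorem siqrb_bacteria_bounded
    (Λ β κ ω μ δ ε η d ρ α₁ α₂ : ℝ)
    (hΛ : 0 < Λ) (hβ : 0 < β) (hκ : 0 < κ) (hω : 0 < ω) (hμ : 0 < μ)
    (hδ : 0 < δ) (hε : 0 < ε) (hη : 0 < η) (hd : 0 < d) (hρ : 0 < ρ)
    (hα₁ : 0 ≤ α₁) (hα₂ : 0 ≤ α₂)
    (S I B : ℝ → ℝ)
    (hB : ∀ t, 0 ≤ t →
      HasDerivAt B (η * I t - d * B t - ρ * B t * S t / (κ + B t)) t)
    (hκB : ∀ t, 0 ≤ t → 0 < κ + B t)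
    (hSnn : ∀ t, 0 ≤ t → 0 ≤ S t)
    (hBnn : ∀ t, 0 ≤ t → 0 ≤ B t)
    (hInn : ∀ t, 0 ≤ t → 0 ≤ I t)
    (hIub : ∀ t, 0 ≤ t → I t ≤ Λ / μ)
    (hB0 : B 0 ≤ Λ * η / (μ * d)) :
    ∀ t, 0 ≤ t → B t ≤ Λ * η / (μ * d) := by
  set M : ℝ := Λ * η / (μ * d) with hM
  set h : ℝ → ℝ := fun t => (B t - M) * Real.exp (d * t) with hh
  have hderiv : ∀ t, 0 ≤ t → HasDerivAt h
      (((η * I t - d * B t - ρ * B t * S t / (κ + B t)) + d * (B t - M))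
        * Real.exp (d * t)) t := by
    intro t ht
    have h1 : HasDerivAt (fun t => B t - M)
        (η * I t - d * B t - ρ * B t * S t / (κ + B t)) t := (hB t ht).sub_const M
    have h2 : HasDerivAt (fun t => Real.exp (d * t)) (d * Real.exp (d * t)) t := by
      have := (Real.hasDerivAt_exp (d * t)).comp t ((hasDerivAt_id t).const_mul d)
      simpa [mul_comm, Function.comp_def] using this
    have := h1.mul h2
    convert this using 1
    · rfl
    · rfl
    · rfl
    · ring
  have hderiv_nonpos : ∀ t, 0 < t →
      ((η * I t - d * B t - ρ * B t * S t / (κ + B t)) + d * (B t - M))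
        * Real.exp (d * t) ≤ 0 := by
    intro t ht
    have ht' : (0:ℝ) ≤ t := le_of_lt ht
    apply mul_nonpos_of_nonpos_of_nonneg _ (Real.exp_nonneg _)
    have hdM : d * M = Λ * η / μ := by
      field_simp [hM]
      rw [hM]; field_simp
    have h1 : η * I t ≤ η * (Λ / μ) := by
      exact mul_le_mul_of_nonneg_left (hIub t ht') hη.le
    have h2 : 0 ≤ ρ * B t * S t / (κ + B t) := by
      apply div_nonneg _ (hκB t ht').le
      exact mul_nonneg (mul_nonneg hρ.le (hBnn t ht')) (hSnn t ht')
    have : η * (Λ / μ) = d * M := by rw [hdM]; ring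
    nlinarith
  have hcont : ContinuousOn h (Set.Ici 0) := by
    intro t ht
    exact ((hderiv t ht).continuousAt).continuousWithinAt
  have hanti : AntitoneOn h (Set.Ici 0) := by
    apply antitoneOn_of_deriv_nonpos (convex_Ici 0) hcont
    · intro t ht
      rw [interior_Ici] at ht
      exact ((hderiv t (le_of_lt ht)).differentiableAt).differentiableWithinAt
    · intro t ht
      rw [interior_Ici] at ht
      rw [(hderiv t (le_of_lt ht)).deriv]
      exact hderiv_nonpos t ht
  intro t ht
  have := hanti (Set.self_mem_Ici) ht ht
  have h0 : h 0 = B 0 - M := by simp [hh]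
  have hexp : 0 < Real.exp (d * t) := Real.exp_pos _
  have : (B t - M) * Real.exp (d * t) ≤ B 0 - M := by
    rw [← h0]; simpa [hh] using this
  nlinarith
end

section
/- If R₀ < 1, then every complex root χ of the characteristic polynomial of the 5×5 real matrix J₀ (equivalently, every complex eigenvalue of J₀) has negative real part, Re χ < 0. -/
set_option maxHeartbeats 1000000
set_option maxRecDepth 8000

/-- The Jacobian of the SIQRB system at the disease-free equilibrium. -/
noncomputable def J₀ (Λ β κ ω μ δ ε η d ρ α₁ α₂ : ℝ) : Matrix (Fin 5) (Fin 5) ℝ :=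
  Matrix.of
    ![![-μ, 0, 0, ω, -(β * Λ / (μ * κ))],
      ![0, -(δ + α₁ + μ), 0, 0, β * Λ / (μ * κ)],
      ![0, δ, -(ε + α₂ + μ), 0, 0],
      ![0, 0, ε, -(ω + μ), 0],
      ![0, η, 0, 0, -d - ρ * Λ / (μ * κ)]]

private lemma det_factor (m om del eps eta b c a1 a2 χ : ℂ) :
    (χ • (1 : Matrix (Fin 5) (Fin 5) ℂ) -
      Matrix.of
        ![![-m, 0, 0, om, -b],
          ![0, -a1, 0, 0, b],
          ![0, del, -a2, 0, 0],
          ![0, 0, eps, -(om + m), 0],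
          ![0, eta, 0, 0, -c]]).det
    = (χ + m) * (χ + (om + m)) * (χ + a2) * ((χ + a1) * (χ + c) - b * eta) := by
  simp [Matrix.det_succ_row_zero, Fin.sum_univ_succ, Matrix.one_apply, Fin.succAbove]
  ring

private lemma quad_re_neg (p q : ℝ) (hp : 0 < p) (hq : 0 < q) (χ : ℂ)
    (h : χ ^ 2 + (p : ℂ) * χ + (q : ℂ) = 0) : χ.re < 0 := by
  have h1 := congrArg Complex.re h
  have h2 := congrArg Complex.im h
  simp [pow_two, Complex.add_re, Complex.add_im, Complex.mul_re, Complex.mul_im] at h1 h2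
  by_contra hx
  push_neg at hx
  have h2' : χ.im * (2 * χ.re + p) = 0 := by linarith [h2]
  rcases mul_eq_zero.mp h2' with hy | hy
  · rw [hy] at h1
    nlinarith
  · nlinarith

/-- if R₀ < 1, every complex eigenvalue of J₀ has negative real part. -/
theorem J0_eigenvalues_neg_re_of_R0_lt_one
    (Λ β κ ω μ δ ε η d ρ α₁ α₂ : ℝ)
    (hΛ : 0 < Λ) (hβ : 0 < β) (hκ : 0 < κ) (hω : 0 < ω) (hμ : 0 < μ)
    (hδ : 0 < δ) (hε : 0 < ε) (hη : 0 < η) (hd : 0 < d) (hρ : 0 < ρ)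
    (hα₁ : 0 ≤ α₁) (hα₂ : 0 ≤ α₂)
    (a₁ R₀ : ℝ) (ha₁ : a₁ = δ + α₁ + μ)
    (hR₀ : R₀ = β * Λ * η / (a₁ * (μ * κ * d + ρ * Λ)))
    (hlt : R₀ < 1) :
    ∀ χ : ℂ,
      (χ • (1 : Matrix (Fin 5) (Fin 5) ℂ) -
        (J₀ Λ β κ ω μ δ ε η d ρ α₁ α₂).map (fun x => (x : ℂ))).det = 0 →
      χ.re < 0 := by
  intro χ hdet
  have hmap : (J₀ Λ β κ ω μ δ ε η d ρ α₁ α₂).map (fun x => (x : ℂ)) =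
      Matrix.of
        ![![-(μ : ℂ), 0, 0, (ω : ℂ), -((β * Λ / (μ * κ) : ℝ) : ℂ)],
          ![0, -((δ + α₁ + μ : ℝ) : ℂ), 0, 0, ((β * Λ / (μ * κ) : ℝ) : ℂ)],
          ![0, (δ : ℂ), -((ε + α₂ + μ : ℝ) : ℂ), 0, 0],
          ![0, 0, (ε : ℂ), -((ω : ℂ) + (μ : ℂ)), 0],
          ![0, (η : ℂ), 0, 0, -((d + ρ * Λ / (μ * κ) : ℝ) : ℂ)]] := by
    ext i j
    fin_cases i <;> fin_cases j <;>
      simp [J₀, Matrix.map_apply, Matrix.vecHead, Matrix.vecTail] <;> push_cast <;> ring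
  rw [hmap, det_factor] at hdet
  -- positivity facts
  have hμκ : 0 < μ * κ := mul_pos hμ hκ
  have ha₁pos : 0 < a₁ := by rw [ha₁]; positivity
  have hden : 0 < a₁ * (μ * κ * d + ρ * Λ) := by positivity
  have hnum : β * Λ * η < a₁ * (μ * κ * d + ρ * Λ) := by
    have := (div_lt_one hden).mp (hR₀ ▸ hlt)
    linarith
  rcases mul_eq_zero.mp hdet with h3 | h4
  · rcases mul_eq_zero.mp h3 with h5 | h6
    · rcases mul_eq_zero.mp h5 with h7 | h8
      · have : χ = -(μ : ℂ) := by linear_combination h7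
        rw [this]
        simpa using hμ
      · have hre : χ = -(((ω + μ : ℝ)) : ℂ) := by push_cast; linear_combination h8
        have : χ.re = -(ω + μ) := by rw [hre]; simp
        rw [this]; linarith
    · have hre : χ = -(((ε + α₂ + μ : ℝ)) : ℂ) := by linear_combination h6
      have : χ.re = -(ε + α₂ + μ) := by rw [hre]; simp
      rw [this]; linarith
  · -- quadratic factor
    set A : ℝ := δ + α₁ + μ with hA
    set C : ℝ := d + ρ * Λ / (μ * κ) with hC
    set B : ℝ := β * Λ / (μ * κ) with hB
    have hApos : 0 < A := by positivity
    have hCpos : 0 < C := by positivity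
    have hqpos : 0 < A * C - B * η := by
      have hid : (A * C - B * η) * (μ * κ) = a₁ * (μ * κ * d + ρ * Λ) - β * Λ * η := by
        rw [hA, hC, hB, ha₁]
        field_simp
        ring_nf
        rw [hA]; ring
      nlinarith [hid, hμκ, hnum]
    have hquad : χ ^ 2 + ((A + C : ℝ) : ℂ) * χ + ((A * C - B * η : ℝ) : ℂ) = 0 := by
      push_cast
      linear_combination h4
    exact quad_re_neg (A + C) (A * C - B * η) (by linarith) hqpos χ hquad
end

section
/- If R₀ > 1, then the 5×5 real matrix J₀ has a real eigenvalue χ > 0; consequently the disease-free equilibrium is linearly unstable. -/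
set_option maxHeartbeats 2000000 in
set_option maxRecDepth 100000 in
lemma det_factor_s6 (Λ β κ ω μ δ ε η d ρ α₁ α₂ χ : ℝ) :
    (χ • (1 : Matrix (Fin 5) (Fin 5) ℝ) - J₀ Λ β κ ω μ δ ε η d ρ α₁ α₂).det =
    (χ + μ) * (χ + (ε + α₂ + μ)) * (χ + (ω + μ)) *
      ((χ + (δ + α₁ + μ)) * (χ + (d + ρ * Λ / (μ * κ))) - (β * Λ / (μ * κ)) * η) := by
  simp (config := { decide := true }) [J₀, Matrix.det_succ_row_zero, Fin.sum_univ_succ,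
    Matrix.one_apply, show ((2 : Fin 3).castSucc : Fin 4) = 2 from rfl,
    show (Fin.succAbove (3 : Fin 4) (2 : Fin 3) : Fin 4) = 2 from rfl]
  ring

/-- if R₀ > 1, then J₀ has a positive real eigenvalue,
so the disease-free equilibrium is linearly unstable. -/
theorem J0_has_positive_eigenvalue_of_R0_gt_one
    (Λ β κ ω μ δ ε η d ρ α₁ α₂ : ℝ)
    (hΛ : 0 < Λ) (hβ : 0 < β) (hκ : 0 < κ) (hω : 0 < ω) (hμ : 0 < μ)
    (hδ : 0 < δ) (hε : 0 < ε) (hη : 0 < η) (hd : 0 < d) (hρ : 0 < ρ)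
    (hα₁ : 0 ≤ α₁) (hα₂ : 0 ≤ α₂)
    (a₁ R₀ : ℝ) (ha₁ : a₁ = δ + α₁ + μ)
    (hR₀ : R₀ = β * Λ * η / (a₁ * (μ * κ * d + ρ * Λ)))
    (hgt : 1 < R₀) :
    ∃ χ : ℝ, 0 < χ ∧
      (χ • (1 : Matrix (Fin 5) (Fin 5) ℝ) - J₀ Λ β κ ω μ δ ε η d ρ α₁ α₂).det = 0 := by
  have ha₁pos : 0 < a₁ := by rw [ha₁]; positivity
  have hden : 0 < a₁ * (μ * κ * d + ρ * Λ) := by positivity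
  have hnum : a₁ * (μ * κ * d + ρ * Λ) < β * Λ * η := by
    have := (one_lt_div hden).mp (hR₀ ▸ hgt)
    linarith
  set c : ℝ := β * Λ / (μ * κ) with hc
  set b : ℝ := d + ρ * Λ / (μ * κ) with hb
  set s : ℝ := a₁ + b with hs
  set k : ℝ := c * η - a₁ * b with hk
  have hμκ : 0 < μ * κ := by positivity
  have hcm : c * (μ * κ) = β * Λ := by rw [hc]; field_simp
  have hbm : b * (μ * κ) = μ * κ * d + ρ * Λ := by rw [hb]; field_simp
  have hkpos : 0 < k := by
    have hkey : k = (β * Λ * η - a₁ * (μ * κ * d + ρ * Λ)) / (μ * κ) := by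
      rw [eq_div_iff hμκ.ne', hk]
      linear_combination η * hcm - a₁ * hbm
    rw [hkey]
    have : 0 < β * Λ * η - a₁ * (μ * κ * d + ρ * Λ) := by linarith
    positivity
  set D : ℝ := s ^ 2 + 4 * k with hD
  have hDpos : 0 < D := by
    have hspos : 0 < s := by rw [hs, hb]; positivity
    positivity
  refine ⟨(Real.sqrt D - s) / 2, ?_, ?_⟩
  · have hs2 : s < Real.sqrt D := by
      have hspos : 0 < s := by rw [hs, hb]; positivity
      nlinarith [Real.sq_sqrt hDpos.le, Real.sqrt_nonneg D]
    linarith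
  · rw [det_factor_s6]
    have hsq : Real.sqrt D ^ 2 = D := Real.sq_sqrt hDpos.le
    have hquad : ((Real.sqrt D - s) / 2 + a₁) * ((Real.sqrt D - s) / 2 + b) - c * η = 0 := by
      have : ((Real.sqrt D - s) / 2 + a₁) * ((Real.sqrt D - s) / 2 + b)
          = (Real.sqrt D ^ 2 - s ^ 2) / 4 + a₁ * b := by rw [hs]; ring
      rw [this, hsq, hD, hk]; ring
    rw [ha₁] at hquad
    rw [hquad, mul_zero]
end

section
/- Assume βη > ρa₁ and set λ* = β(R₀ − 1)a₁a₂a₃(ρΛ + μκd) / (Λ(βη − ρa₁)a₂a₃ + κβd(a₁a₂a₃ − δεω)). Then the denominator Λ(βη − ρa₁)a₂a₃ + κβd(a₁a₂a₃ − δεω) is strictly positive, and λ* > 0 if and only if R₀ > 1. -/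
/-- positivity of the denominator of λ* and the sign of λ*. -/
theorem lambda_star_pos_iff_R0_gt_one
    (Λ β κ ω μ δ ε η d ρ α₁ α₂ : ℝ)
    (hΛ : 0 < Λ) (hβ : 0 < β) (hκ : 0 < κ) (hω : 0 < ω) (hμ : 0 < μ)
    (hδ : 0 < δ) (hε : 0 < ε) (hη : 0 < η) (hd : 0 < d) (hρ : 0 < ρ)
    (hα₁ : 0 ≤ α₁) (hα₂ : 0 ≤ α₂)
    (a₁ a₂ a₃ R₀ lamStar : ℝ)
    (ha₁ : a₁ = δ + α₁ + μ) (ha₂ : a₂ = ε + α₂ + μ) (ha₃ : a₃ = ω + μ)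
    (hR₀ : R₀ = β * Λ * η / (a₁ * (μ * κ * d + ρ * Λ)))
    (hfeas : β * η > ρ * a₁)
    (hlam : lamStar = β * (R₀ - 1) * a₁ * a₂ * a₃ * (ρ * Λ + μ * κ * d) /
      (Λ * (β * η - ρ * a₁) * a₂ * a₃ + κ * β * d * (a₁ * a₂ * a₃ - δ * ε * ω))) :
    0 < Λ * (β * η - ρ * a₁) * a₂ * a₃ + κ * β * d * (a₁ * a₂ * a₃ - δ * ε * ω)
      ∧ (0 < lamStar ↔ 1 < R₀) := by
  have ha1 : 0 < a₁ := by subst ha₁; linarith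
  have ha2 : 0 < a₂ := by subst ha₂; linarith
  have ha3 : 0 < a₃ := by subst ha₃; linarith
  have hprod : 0 < a₁ * a₂ * a₃ - δ * ε * ω := by
    subst ha₁ ha₂ ha₃
    have h1 : δ * ε * ω < δ * ε * (ω + μ) := by nlinarith [mul_pos hδ hε]
    have h2 : δ * ε * (ω + μ) ≤ (δ + α₁ + μ) * (ε + α₂ + μ) * (ω + μ) := by
      gcongr <;> linarith
    linarith
  have hden : 0 < Λ * (β * η - ρ * a₁) * a₂ * a₃ + κ * β * d * (a₁ * a₂ * a₃ - δ * ε * ω) := by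
    have h1 : 0 < Λ * (β * η - ρ * a₁) * a₂ * a₃ :=
      mul_pos (mul_pos (mul_pos hΛ (by linarith)) ha2) ha3
    have h2 : 0 < κ * β * d * (a₁ * a₂ * a₃ - δ * ε * ω) :=
      mul_pos (mul_pos (mul_pos hκ hβ) hd) hprod
    linarith
  refine ⟨hden, ?_⟩
  have hC : 0 < β * a₁ * a₂ * a₃ * (ρ * Λ + μ * κ * d) := by positivity
  rw [hlam]
  rw [div_pos_iff]
  constructor
  · rintro (⟨h, -⟩ | ⟨-, h⟩)
    · nlinarith
    · linarith
  · intro h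
    left
    exact ⟨by nlinarith, hden⟩
end

section
/- Assume βη > ρa₁ and R₀ > 1, and set λ* = β(R₀ − 1)a₁a₂a₃(ρΛ + μκd) / (Λ(βη − ρa₁)a₂a₃ + κβd(a₁a₂a₃ − δεω)) and D = a₁a₂a₃(λ* + μ) − δεωλ*. Then D > 0. -/
/-- positivity of D = a₁a₂a₃(λ* + μ) − δεωλ*. -/
theorem D_pos
    (Λ β κ ω μ δ ε η d ρ α₁ α₂ : ℝ)
    (hΛ : 0 < Λ) (hβ : 0 < β) (hκ : 0 < κ) (hω : 0 < ω) (hμ : 0 < μ)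
    (hδ : 0 < δ) (hε : 0 < ε) (hη : 0 < η) (hd : 0 < d) (hρ : 0 < ρ)
    (hα₁ : 0 ≤ α₁) (hα₂ : 0 ≤ α₂)
    (a₁ a₂ a₃ R₀ lamStar D : ℝ)
    (ha₁ : a₁ = δ + α₁ + μ) (ha₂ : a₂ = ε + α₂ + μ) (ha₃ : a₃ = ω + μ)
    (hR₀ : R₀ = β * Λ * η / (a₁ * (μ * κ * d + ρ * Λ)))
    (hfeas : β * η > ρ * a₁) (hgt : 1 < R₀)
    (hlam : lamStar = β * (R₀ - 1) * a₁ * a₂ * a₃ * (ρ * Λ + μ * κ * d) /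
      (Λ * (β * η - ρ * a₁) * a₂ * a₃ + κ * β * d * (a₁ * a₂ * a₃ - δ * ε * ω)))
    (hD : D = a₁ * a₂ * a₃ * (lamStar + μ) - δ * ε * ω * lamStar) :
    0 < D := by
  have ha1pos : 0 < a₁ := by rw [ha₁]; linarith
  have ha2pos : 0 < a₂ := by rw [ha₂]; linarith
  have ha3pos : 0 < a₃ := by rw [ha₃]; linarith
  have hkey : δ * ε * ω < a₁ * a₂ * a₃ := by
    have h1 : δ < a₁ := by rw [ha₁]; linarith
    have h2 : ε < a₂ := by rw [ha₂]; linarith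
    have h3 : ω < a₃ := by rw [ha₃]; linarith
    calc δ * ε * ω < a₁ * a₂ * ω := by
          apply mul_lt_mul_of_pos_right _ hω
          exact mul_lt_mul' h1.le h2 hε.le ha1pos
      _ ≤ a₁ * a₂ * a₃ := by
          exact mul_le_mul_of_nonneg_left h3.le (by positivity)
  have hden : 0 < Λ * (β * η - ρ * a₁) * a₂ * a₃ + κ * β * d * (a₁ * a₂ * a₃ - δ * ε * ω) := by
    have h1 : 0 < Λ * (β * η - ρ * a₁) * a₂ * a₃ := by
      apply mul_pos (mul_pos (mul_pos hΛ (by linarith)) ha2pos) ha3pos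
    have h2 : 0 < κ * β * d * (a₁ * a₂ * a₃ - δ * ε * ω) := by
      apply mul_pos (mul_pos (mul_pos hκ hβ) hd) (by linarith)
    linarith
  have hnum : 0 < β * (R₀ - 1) * a₁ * a₂ * a₃ * (ρ * Λ + μ * κ * d) := by
    apply mul_pos (mul_pos (mul_pos (mul_pos (mul_pos hβ (by linarith)) ha1pos) ha2pos) ha3pos)
    positivity
  have hlamPos : 0 < lamStar := by rw [hlam]; exact div_pos hnum hden
  have : D = (a₁ * a₂ * a₃ - δ * ε * ω) * lamStar + a₁ * a₂ * a₃ * μ := by rw [hD]; ring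
  rw [this]
  have := mul_pos (by linarith : (0:ℝ) < a₁ * a₂ * a₃ - δ * ε * ω) hlamPos
  nlinarith [mul_pos (mul_pos ha1pos ha2pos) ha3pos]
end

section
/- Assume βη > ρa₁ and R₀ > 1, and set λ* = β(R₀ − 1)a₁a₂a₃(ρΛ + μκd) / (Λ(βη − ρa₁)a₂a₃ + κβd(a₁a₂a₃ − δεω)) and D = a₁a₂a₃(λ* + μ) − δεωλ*. Then the point E* = (S*, I*, Q*, R*, B*) with S* = Λa₁a₂a₃/D, I* = Λa₂a₃λ*/D, Q* = Λδa₃λ*/D, R* = Λδελ*/D, B* = (βη − ρa₁)Λa₂a₃λ*/(βDd) has all five components strictly positive and is an equilibrium of the system: at E*, Λ − βB*S*/(κ+B*) + ωR* − μS* = 0, βB*S*/(κ+B*) − a₁I* = 0, δI* − a₂Q* = 0, εQ* − a₃R* = 0, and ηI* − dB* − ρB*S*/(κ+B*) = 0. -/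
set_option maxHeartbeats 1000000 in
/-- the endemic point E* has strictly positive components and is an
equilibrium of the SIQRB system. -/
theorem endemic_equilibrium_exists
    (Λ β κ ω μ δ ε η d ρ α₁ α₂ : ℝ)
    (hΛ : 0 < Λ) (hβ : 0 < β) (hκ : 0 < κ) (hω : 0 < ω) (hμ : 0 < μ)
    (hδ : 0 < δ) (hε : 0 < ε) (hη : 0 < η) (hd : 0 < d) (hρ : 0 < ρ)
    (hα₁ : 0 ≤ α₁) (hα₂ : 0 ≤ α₂)
    (a₁ a₂ a₃ R₀ lamStar D Sstar Istar Qstar Rstar Bstar : ℝ)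
    (ha₁ : a₁ = δ + α₁ + μ) (ha₂ : a₂ = ε + α₂ + μ) (ha₃ : a₃ = ω + μ)
    (hR₀ : R₀ = β * Λ * η / (a₁ * (μ * κ * d + ρ * Λ)))
    (hfeas : β * η > ρ * a₁) (hgt : 1 < R₀)
    (hlam : lamStar = β * (R₀ - 1) * a₁ * a₂ * a₃ * (ρ * Λ + μ * κ * d) /
      (Λ * (β * η - ρ * a₁) * a₂ * a₃ + κ * β * d * (a₁ * a₂ * a₃ - δ * ε * ω)))
    (hD : D = a₁ * a₂ * a₃ * (lamStar + μ) - δ * ε * ω * lamStar)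
    (hSs : Sstar = Λ * a₁ * a₂ * a₃ / D)
    (hIs : Istar = Λ * a₂ * a₃ * lamStar / D)
    (hQs : Qstar = Λ * δ * a₃ * lamStar / D)
    (hRs : Rstar = Λ * δ * ε * lamStar / D)
    (hBs : Bstar = (β * η - ρ * a₁) * Λ * a₂ * a₃ * lamStar / (β * D * d)) :
    (0 < Sstar ∧ 0 < Istar ∧ 0 < Qstar ∧ 0 < Rstar ∧ 0 < Bstar) ∧
    Λ - β * Bstar * Sstar / (κ + Bstar) + ω * Rstar - μ * Sstar = 0 ∧
    β * Bstar * Sstar / (κ + Bstar) - a₁ * Istar = 0 ∧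
    δ * Istar - a₂ * Qstar = 0 ∧
    ε * Qstar - a₃ * Rstar = 0 ∧
    η * Istar - d * Bstar - ρ * Bstar * Sstar / (κ + Bstar) = 0 := by

  have ha1p : 0 < a₁ := by rw [ha₁]; linarith
  have ha2p : 0 < a₂ := by rw [ha₂]; linarith
  have ha3p : 0 < a₃ := by rw [ha₃]; linarith
  have hXp : 0 < β * η - ρ * a₁ := by linarith
  have hdiff : 0 < a₁ * a₂ * a₃ - δ * ε * ω := by
    have h1 : δ < a₁ := by rw [ha₁]; linarith
    have h2 : ε < a₂ := by rw [ha₂]; linarith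
    have h3 : ω < a₃ := by rw [ha₃]; linarith
    have h4 : δ * ε < a₁ * a₂ := mul_lt_mul'' h1 h2 hδ.le hε.le
    have h5 : δ * ε * ω < a₁ * a₂ * a₃ := mul_lt_mul'' h4 h3 (mul_pos hδ hε).le hω.le
    linarith
  have hWp : 0 < Λ * (β * η - ρ * a₁) * a₂ * a₃ + κ * β * d * (a₁ * a₂ * a₃ - δ * ε * ω) := by
    have := mul_pos (mul_pos (mul_pos hΛ hXp) ha2p) ha3p
    nlinarith [mul_pos (mul_pos hκ hβ) hd]
  have hWne : Λ * (β * η - ρ * a₁) * a₂ * a₃ + κ * β * d * (a₁ * a₂ * a₃ - δ * ε * ω) ≠ 0 := ne_of_gt hWp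
  have hR1 : 0 < R₀ - 1 := by linarith
  have hdenp : 0 < a₁ * (μ * κ * d + ρ * Λ) := by positivity
  have hR' : R₀ * (a₁ * (μ * κ * d + ρ * Λ)) = β * Λ * η := by
    rw [hR₀]; field_simp
  have hlamW : lamStar * (Λ * (β * η - ρ * a₁) * a₂ * a₃ + κ * β * d * (a₁ * a₂ * a₃ - δ * ε * ω))
      = β * (R₀ - 1) * a₁ * a₂ * a₃ * (ρ * Λ + μ * κ * d) := by
    rw [hlam]; exact div_mul_cancel₀ _ hWne
  have hnump : 0 < β * (R₀ - 1) * a₁ * a₂ * a₃ * (ρ * Λ + μ * κ * d) := by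
    have : 0 < ρ * Λ + μ * κ * d := by positivity
    exact mul_pos (mul_pos (mul_pos (mul_pos (mul_pos hβ hR1) ha1p) ha2p) ha3p) this
  have hlamp : 0 < lamStar := by
    rw [hlam]; exact div_pos hnump hWp
  have hDp : 0 < D := by
    rw [hD]
    nlinarith [mul_pos hdiff hlamp, mul_pos (mul_pos (mul_pos ha1p ha2p) ha3p) hμ]
  have hDne : D ≠ 0 := ne_of_gt hDp
  have hSp : 0 < Sstar := by rw [hSs]; positivity
  have hIp : 0 < Istar := by rw [hIs]; positivity
  have hQp : 0 < Qstar := by rw [hQs]; positivity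
  have hRp : 0 < Rstar := by rw [hRs]; positivity
  have hBp : 0 < Bstar := by
    rw [hBs]
    exact div_pos (by positivity) (by positivity)
  have hκB : (0:ℝ) < κ + Bstar := by linarith
  have hκBne : κ + Bstar ≠ 0 := ne_of_gt hκB
  have hBd : Bstar * (β * D * d) = (β * η - ρ * a₁) * Λ * a₂ * a₃ * lamStar := by
    rw [hBs]; field_simp
  have h0 : (β * Bstar - lamStar * (κ + Bstar)) * (β * D * d) = 0 := by
    rw [hD] at hBd ⊢
    linear_combination (β - lamStar) * hBd - lamStar * hlamW - lamStar * β * a₂ * a₃ * hR'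
  have hkey : β * Bstar = lamStar * (κ + Bstar) := by
    have hne : β * D * d ≠ 0 := by positivity
    have := (mul_eq_zero.mp h0).resolve_right hne
    linarith
  have hfrac : β * Bstar * Sstar / (κ + Bstar) = lamStar * Sstar := by
    rw [div_eq_iff hκBne]; linear_combination Sstar * hkey
  have hfracρ : ρ * Bstar * Sstar / (κ + Bstar) = ρ * lamStar * Sstar / β := by
    rw [div_eq_div_iff hκBne (ne_of_gt hβ)]; linear_combination ρ * Sstar * hkey
  refine ⟨⟨hSp, hIp, hQp, hRp, hBp⟩, ?_, ?_, ?_, ?_, ?_⟩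
  · rw [hfrac, hSs, hRs, hD]
    rw [hD] at hDne
    have hDne' : lamStar * a₁ * a₂ * a₃ - lamStar * δ * ε * ω + a₁ * a₂ * a₃ * μ ≠ 0 := by
      intro h; apply hDne; linear_combination h
    field_simp
    linear_combination (-Λ) * mul_inv_cancel₀ hDne'
  · rw [hfrac, hSs, hIs]
    field_simp
    ring
  · rw [hIs, hQs]
    field_simp
    ring
  · rw [hQs, hRs]
    field_simp
    ring
  · rw [hfracρ, hSs, hIs, hBs]
    field_simp
    ring
end

section
/- Assume βη > ρa₁ and R₀ > 1. If (S, I, Q, R, B) is any equilibrium of the system with S ≥ 0, I ≥ 0, Q ≥ 0, R ≥ 0 and B > 0, then (S, I, Q, R, B) equals the endemic equilibrium E* = (Λa₁a₂a₃/D, Λa₂a₃λ*/D, Λδa₃λ*/D, Λδελ*/D, (βη − ρa₁)Λa₂a₃λ*/(βDd)), where λ* = β(R₀ − 1)a₁a₂a₃(ρΛ + μκd) / (Λ(βη − ρa₁)a₂a₃ + κβd(a₁a₂a₃ − δεω)) and D = a₁a₂a₃(λ* + μ) − δεωλ*. -/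
set_option maxHeartbeats 1000000


/-- uniqueness of the endemic equilibrium among equilibria with
nonnegative human compartments and a positive bacterial concentration. -/
theorem endemic_equilibrium_unique
    (Λ β κ ω μ δ ε η d ρ α₁ α₂ : ℝ)
    (hΛ : 0 < Λ) (hβ : 0 < β) (hκ : 0 < κ) (hω : 0 < ω) (hμ : 0 < μ)
    (hδ : 0 < δ) (hε : 0 < ε) (hη : 0 < η) (hd : 0 < d) (hρ : 0 < ρ)
    (hα₁ : 0 ≤ α₁) (hα₂ : 0 ≤ α₂)
    (a₁ a₂ a₃ R₀ lamStar D : ℝ)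
    (ha₁ : a₁ = δ + α₁ + μ) (ha₂ : a₂ = ε + α₂ + μ) (ha₃ : a₃ = ω + μ)
    (hR₀ : R₀ = β * Λ * η / (a₁ * (μ * κ * d + ρ * Λ)))
    (hfeas : β * η > ρ * a₁) (hgt : 1 < R₀)
    (hlam : lamStar = β * (R₀ - 1) * a₁ * a₂ * a₃ * (ρ * Λ + μ * κ * d) /
      (Λ * (β * η - ρ * a₁) * a₂ * a₃ + κ * β * d * (a₁ * a₂ * a₃ - δ * ε * ω)))
    (hD : D = a₁ * a₂ * a₃ * (lamStar + μ) - δ * ε * ω * lamStar)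
    (S I Q R B : ℝ)
    (hSnn : 0 ≤ S) (hInn : 0 ≤ I) (hQnn : 0 ≤ Q) (hRnn : 0 ≤ R) (hBpos : 0 < B)
    (he1 : Λ - β * B * S / (κ + B) + ω * R - μ * S = 0)
    (he2 : β * B * S / (κ + B) - (δ + α₁ + μ) * I = 0)
    (he3 : δ * I - (ε + α₂ + μ) * Q = 0)
    (he4 : ε * Q - (ω + μ) * R = 0)
    (he5 : η * I - d * B - ρ * B * S / (κ + B) = 0) :
    S = Λ * a₁ * a₂ * a₃ / D ∧
    I = Λ * a₂ * a₃ * lamStar / D ∧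
    Q = Λ * δ * a₃ * lamStar / D ∧
    R = Λ * δ * ε * lamStar / D ∧
    B = (β * η - ρ * a₁) * Λ * a₂ * a₃ * lamStar / (β * D * d) := by
  have ha₁p : 0 < a₁ := by rw [ha₁]; linarith
  have ha₂p : 0 < a₂ := by rw [ha₂]; linarith
  have ha₃p : 0 < a₃ := by rw [ha₃]; linarith
  have hP : 0 < κ + B := by linarith
  have hPne : κ + B ≠ 0 := ne_of_gt hP
  rw [← ha₁] at he2
  rw [← ha₂] at he3
  rw [← ha₃] at he4
  obtain ⟨lam, hlamdef⟩ : ∃ lam : ℝ, lam = β * B / (κ + B) := ⟨_, rfl⟩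
  have hlK : lam * (κ + B) = β * B := by rw [hlamdef]; exact div_mul_cancel₀ _ hPne
  have hlampos : 0 < lam := by rw [hlamdef]; exact div_pos (mul_pos hβ hBpos) hP
  -- cleared equations
  have e2 : β * B * S = a₁ * I * (κ + B) := by
    have h : β * B * S / (κ + B) = a₁ * I := by linarith
    exact (div_eq_iff hPne).mp h
  have e1 : (Λ + ω * R - μ * S) * (κ + B) = β * B * S := by
    have h : Λ + ω * R - μ * S = β * B * S / (κ + B) := by linarith
    exact (eq_div_iff hPne).mp h
  have e5 : (η * I - d * B) * (κ + B) = ρ * B * S := by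
    have h : η * I - d * B = ρ * B * S / (κ + B) := by linarith
    exact (eq_div_iff hPne).mp h
  -- equations in terms of lam
  have hlS : lam * S = a₁ * I := by
    apply mul_right_cancel₀ hPne
    linear_combination e2 + S * hlK
  have e1l : Λ + ω * R - μ * S = lam * S := by
    apply mul_right_cancel₀ hPne
    linear_combination e1 - S * hlK
  have e5l : β * (η * I - d * B) = ρ * (lam * S) := by
    apply mul_right_cancel₀ hPne
    linear_combination β * e5 - ρ * S * hlK
  have hQ : a₂ * Q = δ * I := by linarith
  have hR : a₃ * R = ε * Q := by linarith
  have hBk : (β - lam) * B = lam * κ := by linear_combination -hlK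
  -- master relation S * Dl = Λ a₁ a₂ a₃
  have hSD : S * (a₁ * a₂ * a₃ * (lam + μ) - δ * ε * ω * lam) = Λ * a₁ * a₂ * a₃ := by
    linear_combination (-(a₁ * a₂ * a₃)) * e1l + ω * a₁ * a₂ * hR + ω * ε * a₁ * hQ
      - ω * ε * δ * hlS
  have hprod : 0 < S * (a₁ * a₂ * a₃ * (lam + μ) - δ * ε * ω * lam) := by
    rw [hSD]; positivity
  have hSpos : 0 < S := by
    rcases hSnn.lt_or_eq with h | h
    · exact h
    · exfalso; rw [← h] at hprod; simp at hprod
  have hDlpos : 0 < a₁ * a₂ * a₃ * (lam + μ) - δ * ε * ω * lam := by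
    by_contra h
    push_neg at h
    have : S * (a₁ * a₂ * a₃ * (lam + μ) - δ * ε * ω * lam) ≤ 0 :=
      mul_nonpos_iff.mpr (Or.inl ⟨hSnn, h⟩)
    linarith
  -- bacterial relation
  have hB1 : lam * S * (β * η - ρ * a₁) = a₁ * β * d * B := by
    linear_combination a₁ * e5l + β * η * hlS
  have hB2 : S * (β * η - ρ * a₁) * (β - lam) = a₁ * β * d * κ := by
    apply mul_left_cancel₀ (ne_of_gt hlampos)
    linear_combination (β - lam) * hB1 + a₁ * β * d * hBk
  have hKey : Λ * a₁ * a₂ * a₃ * (β * η - ρ * a₁) * (β - lam)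
      = a₁ * β * d * κ * (a₁ * a₂ * a₃ * (lam + μ) - δ * ε * ω * lam) := by
    linear_combination (a₁ * a₂ * a₃ * (lam + μ) - δ * ε * ω * lam) * hB2
      - (β * η - ρ * a₁) * (β - lam) * hSD
  -- positivity of the lamStar denominator
  have hδεω : δ * ε * ω < a₁ * a₂ * a₃ := by
    have l1 : δ < a₁ := by rw [ha₁]; linarith
    have l2 : ε < a₂ := by rw [ha₂]; linarith
    have l3 : ω < a₃ := by rw [ha₃]; linarith
    have s1 : δ * ε * ω < a₁ * ε * ω :=
      mul_lt_mul_of_pos_right (mul_lt_mul_of_pos_right l1 hε) hω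
    have s2 : a₁ * ε * ω ≤ a₁ * a₂ * ω :=
      mul_le_mul_of_nonneg_right (mul_le_mul_of_nonneg_left l2.le ha₁p.le) hω.le
    have s3 : a₁ * a₂ * ω ≤ a₁ * a₂ * a₃ :=
      mul_le_mul_of_nonneg_left l3.le (mul_pos ha₁p ha₂p).le
    linarith
  have hKpos : 0 < Λ * (β * η - ρ * a₁) * a₂ * a₃ + κ * β * d * (a₁ * a₂ * a₃ - δ * ε * ω) := by
    have h1 : 0 < Λ * (β * η - ρ * a₁) * a₂ * a₃ := by
      apply mul_pos (mul_pos (mul_pos hΛ (by linarith)) ha₂p) ha₃p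
    have h2 : 0 < κ * β * d * (a₁ * a₂ * a₃ - δ * ε * ω) := by
      apply mul_pos (mul_pos (mul_pos hκ hβ) hd) (by linarith)
    linarith
  have hKne : Λ * (β * η - ρ * a₁) * a₂ * a₃ + κ * β * d * (a₁ * a₂ * a₃ - δ * ε * ω) ≠ 0 :=
    ne_of_gt hKpos
  have hden : 0 < μ * κ * d + ρ * Λ := by positivity
  -- lamStar satisfies the same linear equation
  have hlamStar_eq : lamStar * (Λ * (β * η - ρ * a₁) * a₂ * a₃
      + κ * β * d * (a₁ * a₂ * a₃ - δ * ε * ω))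
      = β * a₂ * a₃ * (β * Λ * η - a₁ * (μ * κ * d + ρ * Λ)) := by
    rw [hlam, hR₀]
    rw [div_mul_cancel₀ _ hKne]
    field_simp
    ring
  have hlam_eq : lam * (Λ * (β * η - ρ * a₁) * a₂ * a₃
      + κ * β * d * (a₁ * a₂ * a₃ - δ * ε * ω))
      = β * a₂ * a₃ * (β * Λ * η - a₁ * (μ * κ * d + ρ * Λ)) := by
    apply mul_left_cancel₀ (ne_of_gt ha₁p)
    linear_combination -hKey
  have hlamv : lam = lamStar := by
    apply mul_right_cancel₀ hKne
    rw [hlam_eq, hlamStar_eq]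
  rw [hlamv] at hSD hlS hB1
  have hSD2 : S * D = Λ * a₁ * a₂ * a₃ := by rw [hD]; linear_combination hSD
  have hDpos : 0 < D := by
    rw [hD, ← hlamv]; exact hDlpos
  have hDne : D ≠ 0 := ne_of_gt hDpos
  refine ⟨?_, ?_, ?_, ?_, ?_⟩
  · rw [eq_div_iff hDne]; linear_combination hSD2
  · rw [eq_div_iff hDne]
    apply mul_left_cancel₀ (ne_of_gt ha₁p)
    linear_combination lamStar * hSD2 - D * hlS
  · rw [eq_div_iff hDne]
    have hID : I * D = Λ * a₂ * a₃ * lamStar := by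
      apply mul_left_cancel₀ (ne_of_gt ha₁p)
      linear_combination lamStar * hSD2 - D * hlS
    apply mul_left_cancel₀ (ne_of_gt ha₂p)
    linear_combination D * hQ + δ * hID
  · rw [eq_div_iff hDne]
    have hID : I * D = Λ * a₂ * a₃ * lamStar := by
      apply mul_left_cancel₀ (ne_of_gt ha₁p)
      linear_combination lamStar * hSD2 - D * hlS
    have hQD : Q * D = Λ * δ * a₃ * lamStar := by
      apply mul_left_cancel₀ (ne_of_gt ha₂p)
      linear_combination D * hQ + δ * hID
    apply mul_left_cancel₀ (ne_of_gt ha₃p)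
    linear_combination D * hR + ε * hQD
  · rw [eq_div_iff (by positivity : β * D * d ≠ 0)]
    apply mul_left_cancel₀ (ne_of_gt ha₁p)
    linear_combination lamStar * (β * η - ρ * a₁) * hSD2 - D * hB1
end

section
/- Assume βη > ρa₁ and R₀ ≤ 1. Then the system has no equilibrium (S, I, Q, R, B) with S ≥ 0, I ≥ 0, Q ≥ 0, R ≥ 0 and B > 0. -/
set_option maxHeartbeats 2000000 in
/-- if R₀ ≤ 1 (and βη > ρa₁), the SIQRB system has no equilibrium
with nonnegative human compartments and positive bacterial concentration. -/
theorem no_endemic_equilibrium_of_R0_le_one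
    (Λ β κ ω μ δ ε η d ρ α₁ α₂ : ℝ)
    (hΛ : 0 < Λ) (hβ : 0 < β) (hκ : 0 < κ) (hω : 0 < ω) (hμ : 0 < μ)
    (hδ : 0 < δ) (hε : 0 < ε) (hη : 0 < η) (hd : 0 < d) (hρ : 0 < ρ)
    (hα₁ : 0 ≤ α₁) (hα₂ : 0 ≤ α₂)
    (a₁ R₀ : ℝ) (ha₁ : a₁ = δ + α₁ + μ)
    (hR₀ : R₀ = β * Λ * η / (a₁ * (μ * κ * d + ρ * Λ)))
    (hfeas : β * η > ρ * a₁) (hle : R₀ ≤ 1) :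
    ¬ ∃ S I Q R B : ℝ,
      0 ≤ S ∧ 0 ≤ I ∧ 0 ≤ Q ∧ 0 ≤ R ∧ 0 < B ∧
      Λ - β * B * S / (κ + B) + ω * R - μ * S = 0 ∧
      β * B * S / (κ + B) - (δ + α₁ + μ) * I = 0 ∧
      δ * I - (ε + α₂ + μ) * Q = 0 ∧
      ε * Q - (ω + μ) * R = 0 ∧
      η * I - d * B - ρ * B * S / (κ + B) = 0 := by
  rintro ⟨S, I, Q, R, B, hS, hI, hQ, hR, hB, e1, e2, e3, e4, e5⟩
  have hden : (0:ℝ) < κ + B := by linarith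
  have hne : κ + B ≠ 0 := ne_of_gt hden
  have hD : 0 < β * η - ρ * (δ + α₁ + μ) := by rw [ha₁] at hfeas; linarith
  -- clear denominators
  have h2 : β * B * S = ((δ + α₁ + μ) * I) * (κ + B) := by
    have h : β * B * S / (κ + B) = (δ + α₁ + μ) * I := by linarith
    rwa [div_eq_iff hne] at h
  have h5 : ρ * B * S = (η * I - d * B) * (κ + B) := by
    have h : ρ * B * S / (κ + B) = η * I - d * B := by linarith
    rwa [div_eq_iff hne] at h
  have h1 : β * B * S = (Λ + ω * R - μ * S) * (κ + B) := by
    have h : β * B * S / (κ + B) = Λ + ω * R - μ * S := by linarith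
    rwa [div_eq_iff hne] at h
  -- (δ+α₁+μ) I = Λ + ωR - μS
  have hSI : (δ + α₁ + μ) * I = Λ + ω * R - μ * S :=
    mul_right_cancel₀ hne (by linarith)
  -- I (βη - ρ a₁) = β d B
  have hIB : I * (β * η - ρ * (δ + α₁ + μ)) = β * d * B := by
    have key : (β * (η * I - d * B)) * (κ + B) = (ρ * ((δ + α₁ + μ) * I)) * (κ + B) := by
      linear_combination ρ * h2 - β * h5
    have h := mul_right_cancel₀ hne key
    linarith [h]
  have hIpos : 0 < I := by
    have hb : 0 < β * d * B := mul_pos (mul_pos hβ hd) hB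
    rcases mul_pos_iff.mp (hIB ▸ hb : 0 < I * (β * η - ρ * (δ + α₁ + μ))) with ⟨h, _⟩ | ⟨_, h⟩
    · exact h
    · linarith
  -- S (βη - ρ a₁) = (δ+α₁+μ) d (κ+B)
  have hSexpr : S * (β * η - ρ * (δ + α₁ + μ)) = (δ + α₁ + μ) * d * (κ + B) := by
    have hβB : β * B ≠ 0 := ne_of_gt (mul_pos hβ hB)
    have key : (β * B) * (S * (β * η - ρ * (δ + α₁ + μ)))
        = (β * B) * ((δ + α₁ + μ) * d * (κ + B)) := by
      linear_combination (β * η - ρ * (δ + α₁ + μ)) * h2 + (δ + α₁ + μ) * (κ + B) * hIB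
    exact mul_left_cancel₀ hβB key
  -- ω R < δ I
  have h34 : (ε + α₂ + μ) * (ω + μ) * (ω * R) = ω * ε * δ * I := by
    linear_combination (-(ω * ε)) * e3 - ω * (ε + α₂ + μ) * e4
  have ha23 : ω * ε < (ε + α₂ + μ) * (ω + μ) := by
    have hexp : (ε + α₂ + μ) * (ω + μ)
        = ω * ε + (ε * μ + α₂ * ω + α₂ * μ + μ * ω + μ * μ) := by ring
    have t1 : 0 < ε * μ := mul_pos hε hμ
    have t2 : 0 ≤ α₂ * ω := mul_nonneg hα₂ hω.le
    have t3 : 0 ≤ α₂ * μ := mul_nonneg hα₂ hμ.le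
    have t4 : 0 < μ * ω := mul_pos hμ hω
    have t5 : 0 < μ * μ := mul_pos hμ hμ
    linarith
  have ha23pos : 0 < (ε + α₂ + μ) * (ω + μ) := by positivity
  have h1' : (δ * I - ω * R) * ((ε + α₂ + μ) * (ω + μ))
      = ((ε + α₂ + μ) * (ω + μ) - ω * ε) * (δ * I) := by
    linear_combination (-1 : ℝ) * h34
  have hprod : 0 < (δ * I - ω * R) * ((ε + α₂ + μ) * (ω + μ)) := by
    rw [h1']; exact mul_pos (sub_pos.mpr ha23) (mul_pos hδ hIpos)
  have hRlt : ω * R < δ * I := by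
    rcases mul_pos_iff.mp hprod with ⟨h, _⟩ | ⟨_, h⟩
    · linarith
    · linarith
  -- μ S < Λ
  have hSlt : μ * S < Λ := by
    have hexp2 : (δ + α₁ + μ) * I = δ * I + α₁ * I + μ * I := by ring
    have hα₁I : 0 ≤ α₁ * I := mul_nonneg hα₁ hI
    have hμI : 0 < μ * I := mul_pos hμ hIpos
    linarith
  -- R₀ ≤ 1 unfolded
  have hR0 : β * Λ * η ≤ (δ + α₁ + μ) * (μ * κ * d + ρ * Λ) := by
    rw [hR₀, ha₁] at hle
    have hdp : 0 < (δ + α₁ + μ) * (μ * κ * d + ρ * Λ) := by positivity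
    exact (div_le_one hdp).mp hle
  -- final contradiction
  have hmul := mul_lt_mul_of_pos_right hSlt hD
  have hfin : μ * ((δ + α₁ + μ) * d * (κ + B)) < Λ * (β * η - ρ * (δ + α₁ + μ)) := by
    have hmuS : μ * S * (β * η - ρ * (δ + α₁ + μ))
        = μ * ((δ + α₁ + μ) * d * (κ + B)) := by
      linear_combination μ * hSexpr
    linarith
  have ha1pos : (0:ℝ) < δ + α₁ + μ := by linarith
  have hposB : 0 < μ * ((δ + α₁ + μ) * d) * B := by positivity
  linarith [hfin, hR0, hposB]
end

section
/- The characteristic polynomial of the 5×5 real matrix J₀* factors as det(χI₅ − J₀*) = χ(χ + μ)(χ + a₂)(χ + a₃)(χ + a₁ + (ρΛ + μκd)/(μκ)); in particular 0 is a simple eigenvalue of J₀* and all other eigenvalues of J₀* are strictly negative reals. -/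
open Polynomial

/-- The Jacobian of the SIQRB system at the disease-free equilibrium with the
ingestion rate set to the bifurcation value β* = a₁(ρΛ + μκd)/(Λη). -/
noncomputable def J₀star (Λ κ ω μ δ ε η d ρ α₁ α₂ : ℝ) : Matrix (Fin 5) (Fin 5) ℝ :=
  Matrix.of
    ![![-μ, 0, 0, ω, -((δ + α₁ + μ) * (ρ * Λ + μ * κ * d) / (η * μ * κ))],
      ![0, -(δ + α₁ + μ), 0, 0, (δ + α₁ + μ) * (ρ * Λ + μ * κ * d) / (η * μ * κ)],
      ![0, δ, -(ε + α₂ + μ), 0, 0],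
      ![0, 0, ε, -(ω + μ), 0],
      ![0, η, 0, 0, -((ρ * Λ + μ * κ * d) / (μ * κ))]]

set_option maxHeartbeats 2000000 in
theorem charpoly_key (m ω δ ε η e b a₁ a₂ a₃ : ℝ) (h : e * η = a₁ * b) :
    (Matrix.of
    ![![-m, 0, 0, ω, -e],
      ![0, -a₁, 0, 0, e],
      ![0, δ, -a₂, 0, 0],
      ![0, 0, ε, -a₃, 0],
      ![0, η, 0, 0, -b]] : Matrix (Fin 5) (Fin 5) ℝ).charpoly =
      X * (X + C m) * (X + C a₂) * (X + C a₃) * (X + C (a₁ + b)) := by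
  have hC : (C e : ℝ[X]) * (C η) = C a₁ * C b := by rw [← C_mul, ← C_mul, h]
  have hcm : (Matrix.of
    ![![-m, 0, 0, ω, -e],
      ![0, -a₁, 0, 0, e],
      ![0, δ, -a₂, 0, 0],
      ![0, 0, ε, -a₃, 0],
      ![0, η, 0, 0, -b]] : Matrix (Fin 5) (Fin 5) ℝ).charmatrix =
    Matrix.of
    ![![X + C m, 0, 0, -C ω, C e],
      ![0, X + C a₁, 0, 0, -C e],
      ![0, -C δ, X + C a₂, 0, 0],
      ![0, 0, -C ε, X + C a₃, 0],
      ![0, -C η, 0, 0, X + C b]] := by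
    ext i j
    fin_cases i <;> fin_cases j <;>
      simp [Matrix.charmatrix_apply, Matrix.vecHead, Matrix.vecTail]
  rw [Matrix.charpoly, hcm]
  simp [Matrix.det_succ_row_zero, Fin.sum_univ_succ,
    show (Fin.castSucc 2 : Fin 4) = 2 from rfl, show (Fin.castSucc 1 : Fin 4) = 1 from rfl,
    show (Fin.castSucc 0 : Fin 4) = 0 from rfl, show (Fin.succAbove (3 : Fin 4) (2 : Fin 3)) = 2 from rfl]
  ring_nf
  linear_combination (-1:ℝ[X]) * (X + C m) * (X + C a₂) * (X + C a₃) * hC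

/-- the characteristic polynomial of J₀* factors as
χ(χ + μ)(χ + a₂)(χ + a₃)(χ + a₁ + (ρΛ + μκd)/(μκ)); in particular 0 is a simple
eigenvalue and all other eigenvalues are strictly negative reals. -/
theorem charpoly_J0star_factors
    (Λ β κ ω μ δ ε η d ρ α₁ α₂ : ℝ)
    (hΛ : 0 < Λ) (hβ : 0 < β) (hκ : 0 < κ) (hω : 0 < ω) (hμ : 0 < μ)
    (hδ : 0 < δ) (hε : 0 < ε) (hη : 0 < η) (hd : 0 < d) (hρ : 0 < ρ)
    (hα₁ : 0 ≤ α₁) (hα₂ : 0 ≤ α₂)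
    (a₁ a₂ a₃ : ℝ)
    (ha₁ : a₁ = δ + α₁ + μ) (ha₂ : a₂ = ε + α₂ + μ) (ha₃ : a₃ = ω + μ) :
    (J₀star Λ κ ω μ δ ε η d ρ α₁ α₂).charpoly =
      X * (X + C μ) * (X + C a₂) * (X + C a₃) *
        (X + C (a₁ + (ρ * Λ + μ * κ * d) / (μ * κ))) ∧
    rootMultiplicity 0 (J₀star Λ κ ω μ δ ε η d ρ α₁ α₂).charpoly = 1 ∧
    ∀ χ : ℂ,
      (((J₀star Λ κ ω μ δ ε η d ρ α₁ α₂).charpoly).map (algebraMap ℝ ℂ)).IsRoot χ →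
        χ = 0 ∨ (χ.im = 0 ∧ χ.re < 0) := by
  set b : ℝ := (ρ * Λ + μ * κ * d) / (μ * κ) with hb
  have hbpos : 0 < b := by
    apply div_pos <;> positivity
  have ha₁pos : 0 < a₁ := by rw [ha₁]; positivity
  have ha₂pos : 0 < a₂ := by rw [ha₂]; positivity
  have ha₃pos : 0 < a₃ := by rw [ha₃]; positivity
  have hcpos : 0 < a₁ + b := by positivity
  have hmain : (J₀star Λ κ ω μ δ ε η d ρ α₁ α₂).charpoly =
      X * (X + C μ) * (X + C a₂) * (X + C a₃) * (X + C (a₁ + b)) := by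
    have h : (δ + α₁ + μ) * (ρ * Λ + μ * κ * d) / (η * μ * κ) * η = a₁ * b := by
      rw [ha₁, hb]; field_simp
    have := charpoly_key μ ω δ ε η
      ((δ + α₁ + μ) * (ρ * Λ + μ * κ * d) / (η * μ * κ)) b
      (δ + α₁ + μ) (ε + α₂ + μ) (ω + μ) (by rw [h, ha₁])
    rw [J₀star, this, ha₁, ha₂, ha₃]
  refine ⟨hmain, ?_, ?_⟩
  · rw [hmain]
    have hQ : ((X + C μ) * (X + C a₂) * (X + C a₃) * (X + C (a₁ + b)) : ℝ[X]).eval 0 ≠ 0 := by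
      simp only [eval_mul, eval_add, eval_X, eval_C, zero_add]
      positivity
    have hQne : ((X + C μ) * (X + C a₂) * (X + C a₃) * (X + C (a₁ + b)) : ℝ[X]) ≠ 0 := by
      intro hz; rw [hz] at hQ; simp at hQ
    have hXQ : (X * ((X + C μ) * (X + C a₂) * (X + C a₃) * (X + C (a₁ + b))) : ℝ[X]) ≠ 0 :=
      mul_ne_zero X_ne_zero hQne
    have : (X * (X + C μ) * (X + C a₂) * (X + C a₃) * (X + C (a₁ + b)) : ℝ[X])
        = X * ((X + C μ) * (X + C a₂) * (X + C a₃) * (X + C (a₁ + b))) := by ring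
    rw [this, Polynomial.rootMultiplicity_mul hXQ,
      Polynomial.rootMultiplicity_eq_zero hQ, add_zero,
      show (X : ℝ[X]) = X - C 0 by simp, Polynomial.rootMultiplicity_X_sub_C_self]
  · intro χ hχ
    rw [hmain] at hχ
    simp only [IsRoot, Polynomial.map_mul, Polynomial.map_add, Polynomial.map_X,
      Polynomial.map_C, eval_mul, eval_add, eval_X, eval_C, mul_eq_zero] at hχ
    have hcast : ∀ c : ℝ, 0 < c → χ + algebraMap ℝ ℂ c = 0 → χ.im = 0 ∧ χ.re < 0 := by
      intro c hc hcc
      have : χ = -(c : ℂ) := by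
        rw [Complex.coe_algebraMap] at hcc
        linear_combination hcc
      rw [this]
      constructor
      · simp
      · simpa using neg_neg_iff_pos.mpr hc
    rcases hχ with ((((h0 | h1) | h2) | h3) | h4)
    · exact Or.inl h0
    · exact Or.inr (hcast μ hμ h1)
    · exact Or.inr (hcast a₂ ha₂pos h2)
    · exact Or.inr (hcast a₃ ha₃pos h3)
    · exact Or.inr (hcast (a₁ + b) hcpos h4)
end

section
/- The vector w = ((δεω/(a₂a₃) − a₁)/μ, 1, δ/a₂, δε/(a₂a₃), μκη/(ρΛ + μκd)) ∈ ℝ⁵ satisfies J₀* w = 0; i.e., w is a right eigenvector of J₀* associated with the eigenvalue 0. -/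
/-- w is a right eigenvector of J₀* associated with eigenvalue 0. -/
theorem J0star_right_eigenvector
    (Λ β κ ω μ δ ε η d ρ α₁ α₂ : ℝ)
    (hΛ : 0 < Λ) (hβ : 0 < β) (hκ : 0 < κ) (hω : 0 < ω) (hμ : 0 < μ)
    (hδ : 0 < δ) (hε : 0 < ε) (hη : 0 < η) (hd : 0 < d) (hρ : 0 < ρ)
    (hα₁ : 0 ≤ α₁) (hα₂ : 0 ≤ α₂)
    (a₁ a₂ a₃ : ℝ)
    (ha₁ : a₁ = δ + α₁ + μ) (ha₂ : a₂ = ε + α₂ + μ) (ha₃ : a₃ = ω + μ)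
    (w : Fin 5 → ℝ)
    (hw : w = ![(δ * ε * ω / (a₂ * a₃) - a₁) / μ, 1, δ / a₂, δ * ε / (a₂ * a₃),
      μ * κ * η / (ρ * Λ + μ * κ * d)]) :
    (J₀star Λ κ ω μ δ ε η d ρ α₁ α₂).mulVec w = 0 := by
  have hμ' := hμ.ne'
  have hκ' := hκ.ne'
  have hη' := hη.ne'
  have ha2 : a₂ ≠ 0 := by rw [ha₂]; positivity
  have ha3 : a₃ ≠ 0 := by rw [ha₃]; positivity
  have hden : ρ * Λ + μ * κ * d ≠ 0 := by positivity
  subst hw ha₁ ha₂ ha₃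
  funext i
  fin_cases i <;>
    simp [J₀star, Matrix.mulVec, dotProduct, Fin.sum_univ_five] <;>
    field_simp <;> ring
end

section
/- Set β* = a₁(ρΛ + μκd)/(Λη) and define the bifurcation coefficient a = (2μ(β*η − ρa₁)/(ρΛ + μκd))·((δεω − a₁a₂a₃)/(a₂a₃μ) − Λη/(ρΛ + μκd)). Then β*η − ρa₁ = a₁μκd/Λ > 0 and a < 0. -/
/-- the bifurcation coefficient a is negative, and
β*η − ρa₁ = a₁μκd/Λ > 0. -/
theorem bifurcation_coefficient_a_neg
    (Λ β κ ω μ δ ε η d ρ α₁ α₂ : ℝ)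
    (hΛ : 0 < Λ) (hβ : 0 < β) (hκ : 0 < κ) (hω : 0 < ω) (hμ : 0 < μ)
    (hδ : 0 < δ) (hε : 0 < ε) (hη : 0 < η) (hd : 0 < d) (hρ : 0 < ρ)
    (hα₁ : 0 ≤ α₁) (hα₂ : 0 ≤ α₂)
    (a₁ a₂ a₃ βstar a : ℝ)
    (ha₁ : a₁ = δ + α₁ + μ) (ha₂ : a₂ = ε + α₂ + μ) (ha₃ : a₃ = ω + μ)
    (hβstar : βstar = a₁ * (ρ * Λ + μ * κ * d) / (Λ * η))
    (ha : a = 2 * μ * (βstar * η - ρ * a₁) / (ρ * Λ + μ * κ * d) *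
      ((δ * ε * ω - a₁ * a₂ * a₃) / (a₂ * a₃ * μ) - Λ * η / (ρ * Λ + μ * κ * d))) :
    βstar * η - ρ * a₁ = a₁ * μ * κ * d / Λ ∧
    0 < βstar * η - ρ * a₁ ∧ a < 0 := by
  have ha₁pos : 0 < a₁ := by rw [ha₁]; positivity
  have ha₂pos : 0 < a₂ := by rw [ha₂]; positivity
  have ha₃pos : 0 < a₃ := by rw [ha₃]; positivity
  have hden : 0 < ρ * Λ + μ * κ * d := by positivity
  have heq : βstar * η - ρ * a₁ = a₁ * μ * κ * d / Λ := by
    rw [hβstar]; field_simp; ring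
  have hpos : 0 < βstar * η - ρ * a₁ := by rw [heq]; positivity
  refine ⟨heq, hpos, ?_⟩
  have h1 : 0 < 2 * μ * (βstar * η - ρ * a₁) / (ρ * Λ + μ * κ * d) := by
    positivity
  have h2 : (δ * ε * ω - a₁ * a₂ * a₃) / (a₂ * a₃ * μ) - Λ * η / (ρ * Λ + μ * κ * d) < 0 := by
    have hnum : δ * ε * ω - a₁ * a₂ * a₃ < 0 := by
      have : δ * ε * ω < a₁ * a₂ * a₃ := by
        rw [ha₁, ha₂, ha₃]
        have h12 : δ * ε < (δ + α₁ + μ) * (ε + α₂ + μ) := by nlinarith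
        have := mul_lt_mul h12 (by linarith : ω ≤ ω + μ) hω
          (by positivity : (0:ℝ) ≤ (δ + α₁ + μ) * (ε + α₂ + μ))
        linarith
      linarith
    have : (δ * ε * ω - a₁ * a₂ * a₃) / (a₂ * a₃ * μ) < 0 :=
      div_neg_of_neg_of_pos hnum (by positivity)
    have : 0 < Λ * η / (ρ * Λ + μ * κ * d) := by positivity
    linarith
  rw [ha]
  exact mul_neg_of_pos_of_neg h1 h2
end
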